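/- If the product BC of infinite matrices B and C is defined and A is a row finite infinite matrix, then AB, A(BC), and (AB)C are all defined and A(BC) = (AB)C. -/

import Mathlib

open Set

def ProdDef {F : Type*} [Field F] (A B : ℕ → ℕ → F) : Prop :=
  ∀ i k, {j | A i j * B j k ≠ 0}.Finite

noncomputable def mmul {F : Type*} [Field F] (A B : ℕ → ℕ → F) : ℕ → ℕ → F :=
  fun i k => ∑ᶠ j, A i j * B j k

def RowFin {F : Type*} [Field F] (A : ℕ → ℕ → F) : Prop := ∀ i, {j | A i j ≠ 0}.Finite

def ColFin {F : Type*} [Field F] (A : ℕ → ℕ → F) : Prop := ∀ j, {i | A i j ≠ 0}.Finite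

/-- A family of vectors `V j`, summable iff each coordinate has finite support over `j`. -/
def Summab {F : Type*} [Field F] (V : ℕ → ℕ → F) : Prop := ∀ i, {j | V j i ≠ 0}.Finite

/-- Condition (D): the family of rank-one matrices `A_{*j} b_{jk} C_{k*}` is summable. -/
def CondD {F : Type*} [Field F] (A B C : ℕ → ℕ → F) : Prop :=
  ∀ i l, {p : ℕ × ℕ | A i p.1 * B p.1 p.2 * C p.2 l ≠ 0}.Finite

theorem stmt18 {F : Type*} [Field F] (A B C : ℕ → ℕ → F)
    (hBC : ProdDef B C) (hA : RowFin A) :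
    ProdDef A B ∧ ProdDef A (mmul B C) ∧ ProdDef (mmul A B) C ∧
      mmul A (mmul B C) = mmul (mmul A B) C := by
  have hD : CondD A B C := by
    intro i l
    apply ((hA i).biUnion (fun j _ => ((hBC j l).image (fun k => (j, k))))).subset
    rintro ⟨j, k⟩ hp
    simp only [mem_setOf_eq] at hp
    have hAij : A i j ≠ 0 := fun h => hp (by simp [h])
    have hBCjk : B j k * C k l ≠ 0 := fun h => hp (by rw [mul_assoc, h, mul_zero])
    exact mem_biUnion hAij ⟨k, hBCjk, rfl⟩
  have hAB : ProdDef A B := by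
    intro i k
    exact (hA i).subset (fun j hj => fun h => hj (by simp [h]))
  have hABC : ProdDef A (mmul B C) := by
    intro i k
    exact (hA i).subset (fun j hj => fun h => hj (by simp [h]))
  have hABc : ProdDef (mmul A B) C := by
    intro i l
    apply (((hD i l).image Prod.snd)).subset
    intro k hk
    simp only [mem_setOf_eq, mmul] at hk
    have : ∃ j, A i j * B j k * C k l ≠ 0 := by
      by_contra h
      push_neg at h
      apply hk
      rw [finsum_mul _ _]
      exact finsum_eq_zero_of_forall_eq_zero h
    obtain ⟨j, hj⟩ := this
    exact ⟨(j, k), hj, rfl⟩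
  refine ⟨hAB, hABC, hABc, ?_⟩
  funext i l
  have hS := hD i l
  have hsupp : (Function.support fun p : ℕ × ℕ => A i p.1 * B p.1 p.2 * C p.2 l).Finite :=
    hS.subset (fun p hp => hp)
  have hsupp' : (Function.support fun p : ℕ × ℕ => A i p.2 * B p.2 p.1 * C p.1 l).Finite := by
    have := hsupp.image Prod.swap
    apply this.subset
    intro p hp
    exact ⟨p.swap, hp, by simp⟩
  calc mmul A (mmul B C) i l
      = ∑ᶠ j, A i j * ∑ᶠ k, B j k * C k l := rfl
    _ = ∑ᶠ j, ∑ᶠ k, A i j * B j k * C k l := by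
        refine finsum_congr fun j => ?_
        rw [mul_finsum _ _]
        exact finsum_congr fun k => (mul_assoc _ _ _).symm
    _ = ∑ᶠ p : ℕ × ℕ, A i p.1 * B p.1 p.2 * C p.2 l := (finsum_curry _ hsupp).symm
    _ = ∑ᶠ p : ℕ × ℕ, A i p.2 * B p.2 p.1 * C p.1 l := by
        rw [← finsum_comp_equiv (Equiv.prodComm ℕ ℕ)
          (f := fun p : ℕ × ℕ => A i p.1 * B p.1 p.2 * C p.2 l)]
        rfl
    _ = ∑ᶠ k, ∑ᶠ j, A i j * B j k * C k l := finsum_curry _ hsupp'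
    _ = ∑ᶠ k, (∑ᶠ j, A i j * B j k) * C k l := by
        refine finsum_congr fun k => ?_
        rw [finsum_mul _ _]
    _ = mmul (mmul A B) C i l := rfl
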